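/- arXiv:2101.02676 — 3 statements merged into one kernel-verified Lean document; each statement's English description precedes it below -/
import Mathlib

section
/- Let I^{(1)}_{M→2M} : ℂ^M → ℂ^{2M} be defined on the orthonormal basis e_M^m = √M δ^m by I^{(1)}_{M→2M} e_M^m = e_{2M}^{2m}. Then the discretised operators Û_M (multiplication by e^{2πim/M}) and T̂_M(l) (cyclic shift by Ml positions, l = k/M) are strongly cylindrically consistent: Û_{2M} I^{(1)}_{M→2M} = I^{(1)}_{M→2M} Û_M and T̂_{2M}(l) I^{(1)}_{M→2M} = I^{(1)}_{M→2M} T̂_M(l). -/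
/-- The orthonormal basis vector e_M^m = √M δ^m of ℂ^M. -/
noncomputable def eVec (M : ℕ) (m : ZMod M) : ZMod M → ℂ :=
  fun a => if a = m then (Real.sqrt M : ℂ) else 0

/-- The embedding I^{(1)}_{M→2M} : ℂ^M → ℂ^{2M}, determined on the ONB by
e_M^m ↦ e_{2M}^{2m}; on functions: (I f)(n) = √2·f(n/2) for even n, 0 for odd n. -/
noncomputable def embed1 (M : ℕ) (f : ZMod M → ℂ) : ZMod (2 * M) → ℂ :=
  fun n => if n.val % 2 = 0 then (Real.sqrt 2 : ℂ) * f ((n.val / 2 : ℕ) : ZMod M) else 0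

/-- With respect to I^{(1)}_{M→2M} (e_M^m ↦ e_{2M}^{2m}), the
discretised operators Û_M (multiplication by e^{2πim/M}) and T̂_M(l) (cyclic
shift by Ml = k positions, resp. 2Ml = 2k at level 2M) are strongly
cylindrically consistent. -/
theorem stmt7 (M : ℕ) [NeZero M] (k : ℕ) (hk : k < M)
    :
    (∀ f : ZMod M → ℂ,
      (fun n : ZMod (2 * M) =>
          Complex.exp (2 * Real.pi * Complex.I * n.val / (2 * M)) * embed1 M f n) =
        embed1 M (fun m => Complex.exp (2 * Real.pi * Complex.I * m.val / M) * f m)) ∧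
    (∀ f : ZMod M → ℂ,
      (fun n : ZMod (2 * M) => embed1 M f (n + ((2 * k : ℕ) : ZMod (2 * M)))) =
        embed1 M (fun m => f (m + (k : ZMod M)))) := by
  have hM : 0 < M := Nat.pos_of_ne_zero (NeZero.ne M)
  have h2M : (0:ℕ) < 2 * M := by omega
  haveI : NeZero (2 * M) := ⟨by omega⟩
  constructor
  · intro f
    funext n
    have hn : n.val < 2 * M := n.val_lt
    simp only [embed1]
    by_cases h : n.val % 2 = 0
    · simp only [h, if_pos]
      have hv : ((n.val / 2 : ℕ) : ZMod M).val = n.val / 2 :=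
        ZMod.val_natCast_of_lt (by omega)
      rw [hv]
      have harg : (2 * Real.pi * Complex.I * n.val / (2 * M) : ℂ)
          = 2 * Real.pi * Complex.I * (n.val / 2 : ℕ) / M := by
        have : (n.val : ℂ) = 2 * ((n.val / 2 : ℕ) : ℂ) := by
          have : n.val = 2 * (n.val / 2) := by omega
          exact_mod_cast congrArg (Nat.cast (R := ℂ)) this
        rw [this]
        have hMc : (M : ℂ) ≠ 0 := Nat.cast_ne_zero.mpr (NeZero.ne M)
        field_simp
      rw [harg]; ring
    · simp [h]
  · intro f
    funext n
    have hn : n.val < 2 * M := n.val_lt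
    have hkval : ((2 * k : ℕ) : ZMod (2 * M)).val = 2 * k :=
      ZMod.val_natCast_of_lt (by omega)
    have hadd : (n + ((2 * k : ℕ) : ZMod (2 * M))).val = (n.val + 2 * k) % (2 * M) := by
      rw [ZMod.val_add, hkval]
    simp only [embed1, hadd]
    have hpar : (n.val + 2 * k) % (2 * M) % 2 = n.val % 2 := by
      rw [Nat.mod_mod_of_dvd _ ⟨M, rfl⟩]
      omega
    rw [hpar]
    by_cases h : n.val % 2 = 0
    · simp only [h, if_pos]
      have hcast : (((n.val + 2 * k) % (2 * M) / 2 : ℕ) : ZMod M)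
          = ((n.val / 2 : ℕ) : ZMod M) + (k : ZMod M) := by
        by_cases hlt : n.val + 2 * k < 2 * M
        · rw [Nat.mod_eq_of_lt hlt]
          have : (n.val + 2 * k) / 2 = n.val / 2 + k := by omega
          rw [this]; push_cast; ring
        · have hmod : (n.val + 2 * k) % (2 * M) = n.val + 2 * k - 2 * M := by
            rw [Nat.mod_eq_sub_mod (by omega), Nat.mod_eq_of_lt (by omega)]
          rw [hmod]
          have : (n.val + 2 * k - 2 * M) / 2 = n.val / 2 + k - M := by omega
          rw [this]
          have hle : M ≤ n.val / 2 + k := by omega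
          have h2 : ((n.val / 2 + k - M : ℕ) : ZMod M) = ((n.val / 2 + k : ℕ) : ZMod M) := by
            rw [Nat.cast_sub (R := ZMod M) hle]; simp
          rw [h2]; push_cast; ring
      rw [hcast]
    · simp [h]
end

section
/- Let I^{(2)}_{M→2M} : ℂ^M → ℂ^{2M} be defined by I^{(2)}_{M→2M} e_M^m = (e_{2M}^{2m} + e_{2M}^{2m+1})/√2. Then I^{(2)}_{M→2M} is an isometry, and the cyclic shift operators T̂_M(l), l = k/M, are strongly cylindrically consistent with respect to it: T̂_{2M}(l) I^{(2)}_{M→2M} = I^{(2)}_{M→2M} T̂_M(l). -/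
/-- The embedding I^{(2)}_{M→2M} : ℂ^M → ℂ^{2M}, determined on the ONB by
e_M^m ↦ (e_{2M}^{2m} + e_{2M}^{2m+1})/√2; on functions: (I f)(n) = f(⌊n/2⌋). -/
def embed2 (M : ℕ) (f : ZMod M → ℂ) : ZMod (2 * M) → ℂ :=
  fun n => f ((n.val / 2 : ℕ) : ZMod M)

/-- Sum over `ZMod N` equals sum over `range N`. -/
lemma zmod_sum_eq_range {N : ℕ} [NeZero N] (G : ZMod N → ℂ) :
    ∑ n : ZMod N, G n = ∑ i ∈ Finset.range N, G (i : ZMod N) := by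
  refine Finset.sum_nbij' (fun n => n.val) (fun i => (i : ZMod N)) ?_ ?_ ?_ ?_ ?_
  · intro n _; exact Finset.mem_range.mpr (ZMod.val_lt n)
  · intro i _; exact Finset.mem_univ _
  · intro n _; exact ZMod.natCast_zmod_val n
  · intro i hi; exact ZMod.val_cast_of_lt (Finset.mem_range.mp hi)
  · intro n _; rw [ZMod.natCast_zmod_val]

lemma range_double_sum (M : ℕ) (h : ℕ → ℂ) :
    ∑ i ∈ Finset.range (2 * M), h (i / 2) = ∑ j ∈ Finset.range M, 2 * h j := by
  induction M with
  | zero => simp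
  | succ M ih =>
    have : 2 * (M + 1) = (2 * M + 1) + 1 := by ring
    rw [this, Finset.sum_range_succ, Finset.sum_range_succ, ih, Finset.sum_range_succ]
    have h1 : (2 * M) / 2 = M := by omega
    have h2 : (2 * M + 1) / 2 = M := by omega
    rw [h1, h2]; ring

/-- I^{(2)}_{M→2M} is an isometry for the normalized inner products,
and the cyclic shift operators T̂_M(l) (shift by k = Ml, resp. 2k at level 2M)
are strongly cylindrically consistent with respect to it. -/
theorem stmt8 (M : ℕ) [NeZero M] (k : ℕ) (hk : k < M) :
    (∀ f g : ZMod M → ℂ,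
      (1 / ((2 * M : ℕ) : ℂ)) *
          ∑ n : ZMod (2 * M), (starRingEnd ℂ) (embed2 M f n) * embed2 M g n =
        (1 / (M : ℂ)) * ∑ m : ZMod M, (starRingEnd ℂ) (f m) * g m) ∧
    (∀ f : ZMod M → ℂ,
      (fun n : ZMod (2 * M) => embed2 M f (n + ((2 * k : ℕ) : ZMod (2 * M)))) =
        embed2 M (fun m => f (m + (k : ZMod M)))) := by
  have hM : (M : ℂ) ≠ 0 := Nat.cast_ne_zero.mpr (NeZero.ne M)
  have h2M : NeZero (2 * M) := ⟨by have := NeZero.ne M; omega⟩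
  constructor
  · intro f g
    set F : ZMod M → ℂ := fun m => (starRingEnd ℂ) (f m) * g m with hF
    have key : ∑ n : ZMod (2 * M), (starRingEnd ℂ) (embed2 M f n) * embed2 M g n
        = ∑ m : ZMod M, 2 * F m := by
      rw [zmod_sum_eq_range, zmod_sum_eq_range (fun m => 2 * F m)]
      have : ∀ i ∈ Finset.range (2 * M),
          (starRingEnd ℂ) (embed2 M f (i : ZMod (2 * M))) * embed2 M g (i : ZMod (2 * M))
            = (fun j : ℕ => F ((j : ℕ) : ZMod M)) (i / 2) := by
        intro i hi
        simp only [embed2, ZMod.val_cast_of_lt (Finset.mem_range.mp hi)]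
        rfl
      rw [Finset.sum_congr rfl this]
      exact range_double_sum M fun j => F ((j : ℕ) : ZMod M)
    rw [key, Finset.mul_sum, Finset.mul_sum]
    refine Finset.sum_congr rfl fun m _ => ?_
    push_cast
    field_simp
    ring
  · intro f
    funext n
    simp only [embed2]
    congr 1
    have hval : (n + ((2 * k : ℕ) : ZMod (2 * M))).val = (n.val + 2 * k) % (2 * M) := by
      rw [ZMod.val_add, ZMod.val_natCast]
      conv_rhs => rw [Nat.add_mod]
      simp [Nat.mod_mod_of_dvd]
    rw [hval, Nat.mod_mul_right_div_self, ZMod.natCast_mod]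
    have : (n.val + 2 * k) / 2 = n.val / 2 + k := by omega
    rw [this]
    push_cast
    ring
end

section
/- Let φ : H_M → L²([0,1)) send e_M^m = √M δ^m to √M · χ_{[m/M,(m+1)/M)}. Then for all m, n ∈ {0,…,M−1}, ⟨φ(e_M^m), Û φ(e_M^n)⟩_{L²} = e^{2πi(m+1/2)/M} δ_{mn} sin(π/M)/(π/M), where (Ûf)(x) = e^{2πix}f(x). Hence the RG fixed-point form ^{(∞)}U_M is the pull-back of the continuum multiplication operator Û under the piecewise-constant embedding. -/
open MeasureTheory Set Complex

/-- For the embedding φ(e_M^m) = √M χ_{[m/M,(m+1)/M)} into L²([0,1)),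
the matrix elements of the continuum multiplication operator (Ûf)(x) = e^{2πix}f(x)
reproduce the RG fixed-point kernel:
⟨φ(e_M^m), Û φ(e_M^n)⟩ = e^{2πi(m+1/2)/M} δ_{mn} sin(π/M)/(π/M). -/
theorem stmt13 (M : ℕ) (hM : 0 < M) (m n : ℕ) (hm : m < M) (hn : n < M) :
    (∫ x in (0 : ℝ)..1,
        (starRingEnd ℂ)
            ((Real.sqrt M : ℂ) *
              Set.indicator (Set.Ico ((m : ℝ) / M) (((m : ℝ) + 1) / M)) (fun _ => (1 : ℂ)) x) *
          (Complex.exp (2 * Real.pi * Complex.I * x) *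
            ((Real.sqrt M : ℂ) *
              Set.indicator (Set.Ico ((n : ℝ) / M) (((n : ℝ) + 1) / M)) (fun _ => (1 : ℂ)) x))) =
      Complex.exp (2 * Real.pi * Complex.I * ((m : ℂ) + 1 / 2) / M) *
        (if m = n then 1 else 0) * ((Real.sin (Real.pi / M) / (Real.pi / M) : ℝ) : ℂ) := by
  have hMR : (0:ℝ) < M := by exact_mod_cast hM
  by_cases hmn : m = n
  · subst hmn
    simp only [if_pos rfl, mul_one]
    have hsq : (↑(Real.sqrt (M:ℝ)) : ℂ) * ↑(Real.sqrt (M:ℝ)) = (M:ℂ) := by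
      rw [← Complex.ofReal_mul, Real.mul_self_sqrt (Nat.cast_nonneg M)]
      norm_cast
    have key : ∀ x : ℝ,
        (starRingEnd ℂ)
            ((Real.sqrt M : ℂ) *
              Set.indicator (Set.Ico ((m : ℝ) / M) (((m : ℝ) + 1) / M)) (fun _ => (1 : ℂ)) x) *
          (Complex.exp (2 * Real.pi * Complex.I * x) *
            ((Real.sqrt M : ℂ) *
              Set.indicator (Set.Ico ((m : ℝ) / M) (((m : ℝ) + 1) / M)) (fun _ => (1 : ℂ)) x))
        = Set.indicator (Set.Ico ((m : ℝ) / M) (((m : ℝ) + 1) / M))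
            (fun x : ℝ => (M : ℂ) * Complex.exp (2 * Real.pi * Complex.I * x)) x := by
      intro x
      by_cases hx : x ∈ Set.Ico ((m : ℝ) / M) (((m : ℝ) + 1) / M)
      · simp only [Set.indicator_of_mem hx, mul_one, map_mul, Complex.conj_ofReal]
        linear_combination Complex.exp (2 * Real.pi * Complex.I * x) * hsq
      · simp [Set.indicator_of_notMem hx]
    simp only [key]
    rw [intervalIntegral.integral_of_le zero_le_one,
      MeasureTheory.setIntegral_indicator measurableSet_Ico]
    have hab : (m : ℝ) / M ≤ ((m : ℝ) + 1) / M := by gcongr; linarith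
    have ha0 : (0:ℝ) ≤ (m : ℝ) / M := by positivity
    have hb1 : ((m : ℝ) + 1) / M ≤ 1 := by
      rw [div_le_one hMR]
      have : (m:ℝ) + 1 ≤ M := by exact_mod_cast hm
      linarith
    have hsets : ((Set.Ioc (0:ℝ) 1 ∩ Set.Ico ((m : ℝ) / M) (((m : ℝ) + 1) / M)) : Set ℝ)
        =ᵐ[volume] Set.Ioc ((m : ℝ) / M) (((m : ℝ) + 1) / M) := by
      rw [MeasureTheory.ae_eq_set]
      constructor
      · refine measure_mono_null (t := ({(m : ℝ) / M} : Set ℝ)) ?_ (measure_singleton _)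
        intro x hx
        simp only [Set.mem_diff, Set.mem_inter_iff, Set.mem_Ioc, Set.mem_Ico,
          Set.mem_singleton_iff] at *
        rcases hx with ⟨⟨⟨hx1, hx2⟩, hx3, hx4⟩, hx5⟩
        push_neg at hx5
        rcases eq_or_lt_of_le hx3 with h | h
        · exact h.symm
        · exact absurd (hx5 h) (by linarith)
      · refine measure_mono_null (t := ({((m : ℝ) + 1) / M} : Set ℝ)) ?_ (measure_singleton _)
        intro x hx
        rcases hx with ⟨⟨hx1, hx2⟩, hx5⟩
        have h0 : (0:ℝ) < x := lt_of_le_of_lt ha0 hx1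
        have h1 : x ≤ 1 := le_trans hx2 hb1
        simp only [Set.mem_singleton_iff]
        by_contra hne
        exact hx5 (Set.mem_inter ⟨h0, h1⟩ ⟨hx1.le, lt_of_le_of_ne hx2 hne⟩)
    rw [MeasureTheory.setIntegral_congr_set hsets,
      ← intervalIntegral.integral_of_le hab,
      intervalIntegral.integral_const_mul, integral_exp_mul_complex (by
        simp [Real.pi_ne_zero, Complex.I_ne_zero, Complex.ext_iff, Real.pi_pos.ne'])]
    have hM0 : (M:ℂ) ≠ 0 := by exact_mod_cast hM.ne'
    have hπ : (Real.pi : ℂ) ≠ 0 := by exact_mod_cast Real.pi_ne_zero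
    have hA : (2 * (Real.pi:ℂ) * Complex.I) * ↑(((m : ℝ) + 1) / M)
        = 2 * (Real.pi:ℂ) * Complex.I * ((m : ℂ) + 1/2) / M + (Real.pi:ℂ) * Complex.I / M := by
      push_cast; ring
    have hB : (2 * (Real.pi:ℂ) * Complex.I) * ↑((m : ℝ) / M)
        = 2 * (Real.pi:ℂ) * Complex.I * ((m : ℂ) + 1/2) / M + -((Real.pi:ℂ) * Complex.I / M) := by
      push_cast; ring
    rw [hA, hB, Complex.exp_add, Complex.exp_add]
    have hsin : ((Real.sin (Real.pi / M) : ℝ) : ℂ)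
        = (Complex.exp ((Real.pi:ℂ) * Complex.I / M)
            - Complex.exp (-((Real.pi:ℂ) * Complex.I / M))) / (2 * Complex.I) := by
      rw [Complex.ofReal_sin,
        show ((Real.pi / M : ℝ) : ℂ) = (Real.pi : ℂ) / M by push_cast; ring, Complex.sin,
        show -((Real.pi:ℂ) / M) * Complex.I = -((Real.pi:ℂ) * Complex.I / M) by ring,
        show ((Real.pi:ℂ) / M) * Complex.I = (Real.pi:ℂ) * Complex.I / M by ring]
      rw [eq_div_iff (by simp [Complex.I_ne_zero] : (2 * Complex.I) ≠ 0)]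
      linear_combination (Complex.exp (-((Real.pi:ℂ) * Complex.I / M))
        - Complex.exp ((Real.pi:ℂ) * Complex.I / M)) * Complex.I_sq
    rw [Complex.ofReal_div, hsin]
    simp only [if_true]
    push_cast
    field_simp
  · rw [if_neg hmn]
    have key : ∀ x : ℝ,
        (starRingEnd ℂ)
            ((Real.sqrt M : ℂ) *
              Set.indicator (Set.Ico ((m : ℝ) / M) (((m : ℝ) + 1) / M)) (fun _ => (1 : ℂ)) x) *
          (Complex.exp (2 * Real.pi * Complex.I * x) *
            ((Real.sqrt M : ℂ) *
              Set.indicator (Set.Ico ((n : ℝ) / M) (((n : ℝ) + 1) / M)) (fun _ => (1 : ℂ)) x))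
        = 0 := by
      intro x
      by_cases h1 : x ∈ Set.Ico ((m : ℝ) / M) (((m : ℝ) + 1) / M)
      · by_cases h2 : x ∈ Set.Ico ((n : ℝ) / M) (((n : ℝ) + 1) / M)
        · exfalso
          have hnm : (n : ℝ) < (m : ℝ) + 1 := by
            have h := lt_of_le_of_lt h2.1 h1.2
            rw [div_lt_div_iff₀ hMR hMR] at h
            nlinarith
          have hmn' : (m : ℝ) < (n : ℝ) + 1 := by
            have h := lt_of_le_of_lt h1.1 h2.2
            rw [div_lt_div_iff₀ hMR hMR] at h
            nlinarith
          have h3 : n < m + 1 := by exact_mod_cast hnm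
          have h4 : m < n + 1 := by exact_mod_cast hmn'
          omega
        · simp [Set.indicator_of_notMem h2]
      · simp [Set.indicator_of_notMem h1]
    simp only [key]
    simp
end
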